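/- Perturbed range-finder bound (combining inequalities (5.2)–(5.4) in the paper). Let B ∈ ℝ^{m1×m2}, Ω ∈ ℝ^{m2×s}, E1 ∈ ℝ^{m1×s}, with SVD setup for B and k ≤ min(m1, m2), and assume rank(Ω_top) = k. Let Q ∈ ℝ^{m1×r} be any matrix with orthonormal columns whose column span equals the column span of B Ω + E1, and let T be any best rank-k approximation of Qᵀ B. Then ‖B − Q T‖_F ≤ ‖E1 Ω_top†‖_F + ( ‖Σ_bot‖_F² + ‖Σ_bot Ω_bot Ω_top†‖_F² )^{1/2}. -/

import Mathlib

open Matrix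

/-- Frobenius norm of a real matrix. -/
noncomputable def frob {m n : ℕ} (A : Matrix (Fin m) (Fin n) ℝ) : ℝ :=
  Real.sqrt (∑ i, ∑ j, (A i j) ^ 2)

/-- Moore–Penrose pseudoinverse of a full row rank matrix: `W† = Wᵀ (W Wᵀ)⁻¹`. -/
noncomputable def pinvR {k s : ℕ} (W : Matrix (Fin k) (Fin s) ℝ) :
    Matrix (Fin s) (Fin k) ℝ :=
  Wᵀ * (W * Wᵀ)⁻¹

/-- Column span of a matrix. -/
def colSpan {m n : ℕ} (A : Matrix (Fin m) (Fin n) ℝ) : Submodule ℝ (Fin m → ℝ) :=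
  LinearMap.range A.mulVecLin

/-- `T` is a best rank-`k` approximation (in Frobenius norm) of `X`. -/
def IsBestRankApprox {a b : ℕ} (k : ℕ) (X T : Matrix (Fin a) (Fin b) ℝ) : Prop :=
  T.rank ≤ k ∧ ∀ Z : Matrix (Fin a) (Fin b) ℝ, Z.rank ≤ k → frob (X - T) ≤ frob (X - Z)

/-- Embedding of the "bottom" indices `{k, …, m-1}` (as `Fin (m - k)`) into `Fin m`. -/
def botIdx {m k : ℕ} (hk : k ≤ m) (j : Fin (m - k)) : Fin m :=
  ⟨k + j.1, by have := j.isLt; omega⟩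

attribute [local instance] Matrix.frobeniusSeminormedAddCommGroup

noncomputable def frobSq {m n : ℕ} (A : Matrix (Fin m) (Fin n) ℝ) : ℝ :=
  ∑ i, ∑ j, (A i j) ^ 2

lemma frobSq_nonneg {m n : ℕ} (A : Matrix (Fin m) (Fin n) ℝ) : 0 ≤ frobSq A := by
  apply Finset.sum_nonneg; intro i _; apply Finset.sum_nonneg; intro j _; positivity

lemma frob_eq_sqrt {m n : ℕ} (A : Matrix (Fin m) (Fin n) ℝ) : frob A = Real.sqrt (frobSq A) := rfl

lemma frob_nonneg {m n : ℕ} (A : Matrix (Fin m) (Fin n) ℝ) : 0 ≤ frob A := Real.sqrt_nonneg _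

lemma frob_sq {m n : ℕ} (A : Matrix (Fin m) (Fin n) ℝ) : frob A ^ 2 = frobSq A := by
  rw [frob_eq_sqrt, Real.sq_sqrt (frobSq_nonneg A)]

lemma frob_eq_norm {m n : ℕ} (A : Matrix (Fin m) (Fin n) ℝ) : frob A = ‖A‖ := by
  rw [Matrix.frobenius_norm_def, frob, Real.sqrt_eq_rpow]
  congr 1
  apply Finset.sum_congr rfl; intro i _; apply Finset.sum_congr rfl; intro j _
  rw [show (2:ℝ) = ((2:ℕ):ℝ) by norm_num, Real.rpow_natCast, Real.norm_eq_abs, sq_abs]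

lemma frob_sub_le {m n : ℕ} (A B : Matrix (Fin m) (Fin n) ℝ) :
    frob (A - B) ≤ frob A + frob B := by
  simp only [frob_eq_norm]; exact norm_sub_le _ _

lemma frobSq_eq_trace_transpose_mul {m n : ℕ} (A : Matrix (Fin m) (Fin n) ℝ) :
    frobSq A = (Aᵀ * A).trace := by
  simp only [Matrix.trace, Matrix.diag, Matrix.mul_apply, Matrix.transpose_apply, frobSq, sq]
  exact Finset.sum_comm

lemma frobSq_eq_trace_mul_transpose {m n : ℕ} (A : Matrix (Fin m) (Fin n) ℝ) :
    frobSq A = (A * Aᵀ).trace := by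
  rw [frobSq_eq_trace_transpose_mul, Matrix.trace_mul_comm]

lemma frobSq_mul_orth_left {m n p : ℕ} {Q : Matrix (Fin m) (Fin n) ℝ}
    (hQ : Qᵀ * Q = 1) (M : Matrix (Fin n) (Fin p) ℝ) :
    frobSq (Q * M) = frobSq M := by
  rw [frobSq_eq_trace_transpose_mul, frobSq_eq_trace_transpose_mul,
    Matrix.transpose_mul, Matrix.mul_assoc, ← Matrix.mul_assoc Qᵀ, hQ, Matrix.one_mul]

lemma frobSq_mul_orth_right {m n p : ℕ} {A : Matrix (Fin n) (Fin p) ℝ}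
    (hA : Aᵀ * A = 1) (M : Matrix (Fin m) (Fin p) ℝ) :
    frobSq (M * Aᵀ) = frobSq M := by
  rw [frobSq_eq_trace_mul_transpose, frobSq_eq_trace_mul_transpose,
    Matrix.transpose_mul, Matrix.transpose_transpose, Matrix.mul_assoc,
    ← Matrix.mul_assoc Aᵀ, hA, Matrix.one_mul]

lemma frobSq_add_of_cross_zero {m n : ℕ} {X Y : Matrix (Fin m) (Fin n) ℝ}
    (h : (Xᵀ * Y).trace = 0) : frobSq (X + Y) = frobSq X + frobSq Y := by
  have h' : (Yᵀ * X).trace = 0 := by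
    have := Matrix.trace_transpose (Xᵀ * Y)
    rw [Matrix.transpose_mul, Matrix.transpose_transpose] at this
    rw [this, h]
  simp only [frobSq_eq_trace_transpose_mul, Matrix.transpose_add, Matrix.add_mul,
    Matrix.mul_add, Matrix.trace_add, h, h']
  ring

lemma frob_le_frob {m n : ℕ} {A B : Matrix (Fin m) (Fin n) ℝ}
    (h : frobSq A ≤ frobSq B) : frob A ≤ frob B := by
  rw [frob_eq_sqrt, frob_eq_sqrt]; exact Real.sqrt_le_sqrt h

lemma frobSq_le_frobSq {m n : ℕ} {A B : Matrix (Fin m) (Fin n) ℝ}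
    (h : frob A ≤ frob B) : frobSq A ≤ frobSq B := by
  rw [← frob_sq, ← frob_sq]; exact pow_le_pow_left₀ (frob_nonneg A) h 2


lemma botIdx_injective {m k : ℕ} (hk : k ≤ m) : Function.Injective (botIdx hk) := by
  intro a b h
  have : (k + a.1 : ℕ) = k + b.1 := congrArg Fin.val h
  exact Fin.ext (by omega)

lemma sum_split {m k : ℕ} (hk : k ≤ m) (f : Fin m → ℝ) :
    ∑ i, f i = (∑ i : Fin k, f (Fin.castLE hk i)) + ∑ j : Fin (m - k), f (botIdx hk j) := by
  have h : k + (m - k) = m := by omega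
  let e : Fin k ⊕ Fin (m - k) ≃ Fin m := finSumFinEquiv.trans (finCongr h)
  rw [← Equiv.sum_comp e f, Fintype.sum_sum_type]
  refine congrArg₂ (· + ·) ?_ ?_ <;>
    · refine Finset.sum_congr rfl fun i _ => congrArg f (Fin.ext ?_)
      simp [e, botIdx]

lemma mul_split {a b n k : ℕ} (hk : k ≤ n) (M : Matrix (Fin a) (Fin n) ℝ)
    (N : Matrix (Fin n) (Fin b) ℝ) :
    M * N = M.submatrix id (Fin.castLE hk) * N.submatrix (Fin.castLE hk) id
      + M.submatrix id (botIdx hk) * N.submatrix (botIdx hk) id := by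
  ext i j
  simp only [Matrix.add_apply, Matrix.mul_apply, Matrix.submatrix_apply, id_eq]
  exact sum_split hk _

lemma submatrix_orth {m a b : ℕ} (V : Matrix (Fin m) (Fin m) ℝ) (hV : Vᵀ * V = 1)
    (f : Fin a → Fin m) (g : Fin b → Fin m) (i : Fin a) (j : Fin b) :
    ((V.submatrix id f)ᵀ * V.submatrix id g) i j = if f i = g j then 1 else 0 := by
  have h := congrFun (congrFun hV (f i)) (g j)
  simp only [Matrix.mul_apply, Matrix.transpose_apply, Matrix.one_apply] at h
  simp only [Matrix.mul_apply, Matrix.transpose_apply, Matrix.submatrix_apply, id_eq]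
  rw [h]

lemma castLE_ne_botIdx {m k : ℕ} (hk : k ≤ m) (i : Fin k) (j : Fin (m - k)) :
    Fin.castLE hk i ≠ botIdx hk j := by
  intro h
  have : (i.1 : ℕ) = k + j.1 := congrArg Fin.val h
  have := i.isLt; omega

lemma submatrix_transpose_mul {m n a : ℕ} (V : Matrix (Fin m) (Fin m) ℝ)
    (Ω : Matrix (Fin m) (Fin n) ℝ) (f : Fin a → Fin m) :
    (Vᵀ * Ω).submatrix f id = (V.submatrix id f)ᵀ * Ω := by
  ext i j; simp [Matrix.mul_apply]

lemma transpose_submatrix' {m a : ℕ} (V : Matrix (Fin m) (Fin m) ℝ) (f : Fin a → Fin m) :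
    (Vᵀ).submatrix f id = (V.submatrix id f)ᵀ := by
  ext i j; simp

lemma isUnit_det_of_rank_eq {k : ℕ} (A : Matrix (Fin k) (Fin k) ℝ) (h : A.rank = k) :
    IsUnit A.det := by
  have hsurj : Function.Surjective A.mulVecLin := by
    rw [← LinearMap.range_eq_top]
    apply Submodule.eq_top_of_finrank_eq
    rw [Matrix.rank] at h
    simp [h]
  choose g hg using hsurj
  let C : Matrix (Fin k) (Fin k) ℝ := Matrix.of fun i j => g (Pi.single j 1) i
  have hAC : A * C = 1 := by
    ext i j
    have h2 : A.mulVec (fun l => C l j) = Pi.single j 1 := hg (Pi.single j 1)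
    have h3 := congrFun h2 i
    simp only [Matrix.mulVec, dotProduct] at h3
    simp only [Matrix.mul_apply, Matrix.one_apply]
    rw [h3, Pi.single_apply]
  have : A.det * C.det = 1 := by rw [← Matrix.det_mul, hAC, Matrix.det_one]
  exact IsUnit.of_mul_eq_one _ this

lemma colSpan_mul_le {m n p : ℕ} (A : Matrix (Fin m) (Fin n) ℝ)
    (B : Matrix (Fin n) (Fin p) ℝ) : colSpan (A * B) ≤ colSpan A := by
  rintro x ⟨y, rfl⟩
  exact ⟨B.mulVec y, by simp [Matrix.mulVecLin_apply, ← Matrix.mulVec_mulVec]⟩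

lemma proj_eq_of_colSpan_le {m r n : ℕ} (Q : Matrix (Fin m) (Fin r) ℝ)
    (hQ : Qᵀ * Q = 1) (Z : Matrix (Fin m) (Fin n) ℝ) (hle : colSpan Z ≤ colSpan Q) :
    Q * (Qᵀ * Z) = Z := by
  ext i j
  have hmem : Z.mulVec (Pi.single j 1) ∈ colSpan Q :=
    hle ⟨Pi.single j 1, rfl⟩
  obtain ⟨x, hx⟩ := hmem
  simp only [Matrix.mulVecLin_apply] at hx
  have key : (Q * (Qᵀ * Z)).mulVec (Pi.single j 1) = Z.mulVec (Pi.single j 1) := by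
    have e1 : Qᵀ *ᵥ (Q *ᵥ x) = x := by rw [Matrix.mulVec_mulVec, hQ, Matrix.one_mulVec]
    calc (Q * (Qᵀ * Z)) *ᵥ Pi.single j 1
        = Q *ᵥ (Qᵀ *ᵥ (Z *ᵥ Pi.single j 1)) := by
          rw [Matrix.mulVec_mulVec, Matrix.mulVec_mulVec, Matrix.mul_assoc]
      _ = Q *ᵥ x := by rw [← hx, e1]
      _ = Z *ᵥ Pi.single j 1 := hx
  have h1 := congrFun key i
  simpa [Matrix.mulVec_single] using h1


lemma bot_cols_factor {m1 m2 k : ℕ} (hk1 : k ≤ m1) (hk2 : k ≤ m2)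
    (Sg : Matrix (Fin m1) (Fin m2) ℝ)
    (hSg : ∀ (i : Fin m1) (j : Fin m2), (i : ℕ) ≠ (j : ℕ) → Sg i j = 0) :
    Sg.submatrix id (botIdx hk2) =
      ((1 : Matrix (Fin m1) (Fin m1) ℝ).submatrix id (botIdx hk1)) *
        Sg.submatrix (botIdx hk1) (botIdx hk2) := by
  ext i j
  simp only [Matrix.mul_apply, Matrix.submatrix_apply, id_eq, Matrix.one_apply]
  by_cases h : k ≤ i.1
  · have hlt : i.1 - k < m1 - k := by have := i.isLt; omega
    set l0 : Fin (m1 - k) := ⟨i.1 - k, hlt⟩ with hl0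
    have hi : i = botIdx hk1 l0 := Fin.ext (by simp [botIdx, hl0]; omega)
    rw [Finset.sum_eq_single l0]
    · rw [if_pos hi, one_mul, ← hi]
    · intro l _ hl
      rw [if_neg, zero_mul]
      intro he
      apply hl
      apply Fin.ext
      have hv := congrArg Fin.val he
      simp only [botIdx] at hv
      simp only [hl0]
      omega
    · intro h'; exact absurd (Finset.mem_univ _) h'
  · rw [Finset.sum_eq_zero]
    · exact hSg i (botIdx hk2 j) (by simp only [botIdx]; omega)
    · intro l _
      rw [if_neg, zero_mul]
      intro he
      have hv := congrArg Fin.val he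
      simp only [botIdx] at hv
      omega

lemma frobSq_neg {m n : ℕ} (A : Matrix (Fin m) (Fin n) ℝ) : frobSq (-A) = frobSq A := by
  simp [frobSq]

lemma pythag_decomp {m1 r m2 : ℕ} (B : Matrix (Fin m1) (Fin m2) ℝ)
    (Q : Matrix (Fin m1) (Fin r) ℝ) (hQ : Qᵀ * Q = 1) (M : Matrix (Fin r) (Fin m2) ℝ) :
    frobSq (B - Q * M) = frobSq (B - Q * (Qᵀ * B)) + frobSq (Qᵀ * B - M) := by
  have hsplit : B - Q * M = (B - Q * (Qᵀ * B)) + Q * (Qᵀ * B - M) := by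
    rw [Matrix.mul_sub]; abel
  have hzz : (Q * (Qᵀ * B))ᵀ * Q = Bᵀ * Q := by
    rw [Matrix.transpose_mul, Matrix.mul_assoc, hQ, Matrix.mul_one, Matrix.transpose_mul,
      Matrix.transpose_transpose]
  have hz : (B - Q * (Qᵀ * B))ᵀ * Q = 0 := by
    rw [Matrix.transpose_sub, Matrix.sub_mul, hzz, sub_self]
  rw [hsplit, frobSq_add_of_cross_zero, frobSq_mul_orth_left hQ]
  rw [← Matrix.mul_assoc, hz, Matrix.zero_mul, Matrix.trace_zero]


set_option maxHeartbeats 1000000 in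
theorem stmt2 {m1 m2 s r k : ℕ} (hk1 : k ≤ m1) (hk2 : k ≤ m2)
    (B : Matrix (Fin m1) (Fin m2) ℝ) (Ω : Matrix (Fin m2) (Fin s) ℝ)
    (E1 : Matrix (Fin m1) (Fin s) ℝ)
    (U : Matrix (Fin m1) (Fin m1) ℝ) (V : Matrix (Fin m2) (Fin m2) ℝ)
    (Sg : Matrix (Fin m1) (Fin m2) ℝ)
    (hU : Uᵀ * U = 1) (hU' : U * Uᵀ = 1)
    (hV : Vᵀ * V = 1) (hV' : V * Vᵀ = 1)
    (hSg : ∀ (i : Fin m1) (j : Fin m2), (i : ℕ) ≠ (j : ℕ) → Sg i j = 0)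
    (hSVD : B = U * Sg * Vᵀ)
    (hrank : ((V.submatrix id (Fin.castLE hk2))ᵀ * Ω).rank = k)
    (Q : Matrix (Fin m1) (Fin r) ℝ) (hQ : Qᵀ * Q = 1)
    (hQspan : colSpan Q = colSpan (B * Ω + E1))
    (T : Matrix (Fin r) (Fin m2) ℝ)
    (hT : IsBestRankApprox k (Qᵀ * B) T) :
    frob (B - Q * T) ≤
      frob (E1 * pinvR ((V.submatrix id (Fin.castLE hk2))ᵀ * Ω))
        + Real.sqrt
            ((frob (Sg.submatrix (botIdx hk1) (botIdx hk2))) ^ 2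
              + (frob (Sg.submatrix (botIdx hk1) (botIdx hk2)
                  * ((V.submatrix id (botIdx hk2))ᵀ * Ω)
                  * pinvR ((V.submatrix id (Fin.castLE hk2))ᵀ * Ω))) ^ 2) := by
  classical
  set V1 : Matrix (Fin m2) (Fin k) ℝ := V.submatrix id (Fin.castLE hk2) with hV1def
  set V2 : Matrix (Fin m2) (Fin (m2 - k)) ℝ := V.submatrix id (botIdx hk2) with hV2def
  set S2 : Matrix (Fin (m1 - k)) (Fin (m2 - k)) ℝ :=
    Sg.submatrix (botIdx hk1) (botIdx hk2) with hS2def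
  set Ot : Matrix (Fin k) (Fin s) ℝ := V1ᵀ * Ω with hOtdef
  set Ob : Matrix (Fin (m2 - k)) (Fin s) ℝ := V2ᵀ * Ω with hObdef
  set F : Matrix (Fin s) (Fin k) ℝ := pinvR Ot with hFdef
  set St : Matrix (Fin m1) (Fin k) ℝ := Sg.submatrix id (Fin.castLE hk2) with hStdef
  set Sb : Matrix (Fin m1) (Fin (m2 - k)) ℝ := Sg.submatrix id (botIdx hk2) with hSbdef
  set G : Matrix (Fin s) (Fin m2) ℝ := F * V1ᵀ with hGdef
  set Z : Matrix (Fin m1) (Fin m2) ℝ := (B * Ω + E1) * G with hZdef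
  -- block orthogonality facts
  have hV1V1 : V1ᵀ * V1 = 1 := by
    ext i j
    rw [hV1def, submatrix_orth V hV]
    simp only [Matrix.one_apply]
    congr 1
    simp only [eq_iff_iff]
    constructor
    · intro h
      have hv : (Fin.castLE hk2 i).1 = (Fin.castLE hk2 j).1 := congrArg Fin.val h
      exact Fin.ext hv
    · intro h; exact congrArg _ h
  have hV2V2 : V2ᵀ * V2 = 1 := by
    ext i j
    rw [hV2def, submatrix_orth V hV]
    simp only [Matrix.one_apply]
    congr 1
    simp only [eq_iff_iff]
    exact ⟨fun h => botIdx_injective hk2 h, fun h => congrArg _ h⟩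
  have hV1V2 : V1ᵀ * V2 = 0 := by
    ext i j
    rw [hV1def, hV2def, submatrix_orth V hV, if_neg (castLE_ne_botIdx hk2 i j)]
    simp
  -- pseudoinverse fact
  have hdet : IsUnit (Ot * Otᵀ).det := by
    apply isUnit_det_of_rank_eq
    rw [Matrix.rank_self_mul_transpose]
    exact hrank
  have hOtF : Ot * F = 1 := by
    rw [hFdef, pinvR, ← Matrix.mul_assoc, Matrix.mul_nonsing_inv _ hdet]
  have hOtG : Ot * G = V1ᵀ := by
    rw [hGdef, ← Matrix.mul_assoc, hOtF, Matrix.one_mul]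
  -- decomposition of B
  have hB : B = U * (St * V1ᵀ + Sb * V2ᵀ) := by
    rw [hSVD, Matrix.mul_assoc, mul_split hk2 Sg Vᵀ, transpose_submatrix', transpose_submatrix']
  have hBΩ : B * Ω = U * (St * Ot + Sb * Ob) := by
    rw [hB, Matrix.mul_assoc]
    congr 1
    rw [Matrix.add_mul, Matrix.mul_assoc, Matrix.mul_assoc]
  have hZ2 : Z = U * (St * V1ᵀ + Sb * (Ob * G)) + E1 * G := by
    rw [hZdef, Matrix.add_mul, hBΩ, Matrix.mul_assoc, Matrix.add_mul,
      Matrix.mul_assoc St, Matrix.mul_assoc Sb, hOtG]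
  have hBZ : B - Z = U * (Sb * (V2ᵀ - Ob * G)) - E1 * G := by
    rw [hZ2, hB]
    simp only [Matrix.mul_sub, Matrix.mul_add]
    abel
  -- Z lies in the column span of Q
  have hZspan : colSpan Z ≤ colSpan Q := by
    rw [hQspan, hZdef]
    exact colSpan_mul_le _ _
  have hQZ : Q * (Qᵀ * Z) = Z := proj_eq_of_colSpan_le Q hQ Z hZspan
  -- rank bound for the competitor
  have hrankW : (Qᵀ * Z).rank ≤ k := by
    have hZform : Z = ((B * Ω + E1) * F) * V1ᵀ := by rw [hZdef, hGdef, Matrix.mul_assoc]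
    calc (Qᵀ * Z).rank ≤ Z.rank := Matrix.rank_mul_le_right _ _
      _ ≤ (V1ᵀ).rank := by rw [hZform]; exact Matrix.rank_mul_le_right _ _
      _ ≤ k := le_trans (Matrix.rank_le_card_height _) (by simp)
  -- step 1 : frob (B - Q*T) ≤ frob (B - Z)
  have hstep1 : frob (B - Q * T) ≤ frob (B - Z) := by
    apply frob_le_frob
    rw [pythag_decomp B Q hQ T]
    have h2 : frobSq (B - Z) = frobSq (B - Q * (Qᵀ * B)) + frobSq (Qᵀ * B - Qᵀ * Z) := by
      conv_lhs => rw [← hQZ]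
      exact pythag_decomp B Q hQ (Qᵀ * Z)
    have h3 : frobSq (Qᵀ * B - T) ≤ frobSq (Qᵀ * B - Qᵀ * Z) :=
      frobSq_le_frobSq (hT.2 (Qᵀ * Z) hrankW)
    linarith
  -- step 2 : bound frob (B - Z)
  have hJfact : Sb = ((1 : Matrix (Fin m1) (Fin m1) ℝ).submatrix id (botIdx hk1)) * S2 :=
    bot_cols_factor hk1 hk2 Sg hSg
  have hJtJ : ((1 : Matrix (Fin m1) (Fin m1) ℝ).submatrix id (botIdx hk1))ᵀ *
      ((1 : Matrix (Fin m1) (Fin m1) ℝ).submatrix id (botIdx hk1)) = 1 := by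
    ext i j
    rw [submatrix_orth (1 : Matrix (Fin m1) (Fin m1) ℝ)
      (by rw [Matrix.transpose_one, Matrix.one_mul])]
    simp only [Matrix.one_apply]
    congr 1
    simp only [eq_iff_iff]
    exact ⟨fun h => botIdx_injective hk1 h, fun h => congrArg _ h⟩
  have hfrobE : frob (E1 * G) = frob (E1 * F) := by
    rw [frob_eq_sqrt, frob_eq_sqrt]
    congr 1
    rw [hGdef, ← Matrix.mul_assoc]
    exact frobSq_mul_orth_right hV1V1 _
  have hU1 : frob (U * (Sb * (V2ᵀ - Ob * G))) =
      Real.sqrt (frob S2 ^ 2 + frob (S2 * Ob * F) ^ 2) := by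
    rw [frob_eq_sqrt, frob_sq, frob_sq]
    congr 1
    rw [frobSq_mul_orth_left hU]
    have hsplit : Sb * (V2ᵀ - Ob * G) = Sb * V2ᵀ + -((Sb * Ob * F) * V1ᵀ) := by
      rw [Matrix.mul_sub, hGdef, ← Matrix.mul_assoc, ← Matrix.mul_assoc]
      abel
    rw [hsplit, frobSq_add_of_cross_zero, frobSq_neg]
    · congr 1
      · rw [frobSq_mul_orth_right hV2V2, hJfact]
        exact frobSq_mul_orth_left hJtJ _
      · rw [frobSq_mul_orth_right hV1V1, hJfact,
          Matrix.mul_assoc _ S2 Ob, Matrix.mul_assoc _ (S2 * Ob) F]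
        exact frobSq_mul_orth_left hJtJ _
    · rw [Matrix.transpose_mul, Matrix.transpose_transpose, Matrix.mul_neg,
        Matrix.trace_neg, Matrix.mul_assoc V2, Matrix.trace_mul_comm,
        Matrix.mul_assoc Sbᵀ, Matrix.mul_assoc (Sb * Ob * F), hV1V2,
        Matrix.mul_zero, Matrix.mul_zero, Matrix.trace_zero, neg_zero]
  calc frob (B - Q * T) ≤ frob (B - Z) := hstep1
    _ = frob (U * (Sb * (V2ᵀ - Ob * G)) - E1 * G) := by rw [hBZ]
    _ ≤ frob (U * (Sb * (V2ᵀ - Ob * G))) + frob (E1 * G) := frob_sub_le _ _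
    _ = frob (E1 * F) + Real.sqrt (frob S2 ^ 2 + frob (S2 * Ob * F) ^ 2) := by
        rw [hfrobE, hU1, add_comm]
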